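/- arXiv:2102.01388 — 2 statements merged into one kernel-verified Lean document; each statement's English description precedes it below -/
import Mathlib

section
/- Let $f(x,y) = (x+y+1)^4/(xy)$. Then for every $n \geq 0$, the constant term of $f^n$ equals $(4n)!/((n!)^2 (2n)!)$. -/
/-- Laurent monomial `x^(m 0) * y^(m 1)` in the algebra of Laurent polynomials
in two variables over `ℚ`, modeled as `AddMonoidAlgebra ℚ (Fin 2 →₀ ℤ)`. -/
noncomputable def Lmon (m : Fin 2 →₀ ℤ) : AddMonoidAlgebra ℚ (Fin 2 →₀ ℤ) :=
  AddMonoidAlgebra.single m 1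

open Finset

/-- For `f = (x+y+1)^4/(xy)`, the constant term of `f^n` is `(4n)!/((n!)^2 (2n)!)`. -/
theorem constant_term_quartic_dP2 (n : ℕ)
    (f : AddMonoidAlgebra ℚ (Fin 2 →₀ ℤ))
    (hf : f = (Lmon (Finsupp.single 0 1) + Lmon (Finsupp.single 1 1) + 1) ^ 4 *
      Lmon (-(Finsupp.single 0 1 + Finsupp.single 1 1))) :
    ((f ^ n).coeff (0 : Fin 2 →₀ ℤ)) * ((n.factorial : ℚ) ^ 2 * ((2 * n).factorial : ℚ)) =
      ((4 * n).factorial : ℚ) := by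
  subst hf
  set e0 : Fin 2 →₀ ℤ := Finsupp.single 0 1 with he0
  set e1 : Fin 2 →₀ ℤ := Finsupp.single 1 1 with he1
  set g : AddMonoidAlgebra ℚ (Fin 2 →₀ ℤ) := Lmon e0 + Lmon e1 + 1 with hg
  -- coordinates of e0, e1
  have he00 : e0 0 = 1 := by simp [he0]
  have he01 : e0 1 = 0 := by simp [he0]
  have he10 : e1 0 = 0 := by simp [he1]
  have he11 : e1 1 = 1 := by simp [he1]
  -- step 1: rewrite the power
  have hLpow : ∀ (m : Fin 2 →₀ ℤ), Lmon m ^ n = AddMonoidAlgebra.single (n • m) (1 : ℚ) := by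
    intro m
    rw [Lmon, AddMonoidAlgebra.single_pow, one_pow]
  have hstep : (g ^ 4 * Lmon (-(e0 + e1))) ^ n
      = g ^ (4 * n) * AddMonoidAlgebra.single (n • (-(e0 + e1))) (1 : ℚ) := by
    rw [mul_pow, ← pow_mul, hLpow]
  -- step 2: constant term via `mul_single_apply`
  have hconst : ((g ^ 4 * Lmon (-(e0 + e1))) ^ n).coeff (0 : Fin 2 →₀ ℤ)
      = (g ^ (4 * n)).coeff (n • e0 + n • e1) := by
    rw [hstep, AddMonoidAlgebra.coeff_mul_single_apply, mul_one]
    congr 1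
    simp [smul_add]
  -- step 3: expand g ^ (4n)
  have hXp : ∀ j : ℕ, Lmon e0 ^ j = AddMonoidAlgebra.single (j • e0) (1 : ℚ) := by
    intro j; rw [Lmon, AddMonoidAlgebra.single_pow, one_pow]
  have hYp : ∀ j : ℕ, Lmon e1 ^ j = AddMonoidAlgebra.single (j • e1) (1 : ℚ) := by
    intro j; rw [Lmon, AddMonoidAlgebra.single_pow, one_pow]
  set N := 4 * n with hN
  have hexp : g ^ N = ∑ k ∈ range (N + 1), ∑ j ∈ range (k + 1),
      AddMonoidAlgebra.single (j • e0 + (k - j) • e1)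
        (((k.choose j : ℚ)) * ((N.choose k : ℚ))) := by
    rw [hg, add_pow]
    refine Finset.sum_congr rfl fun k _ => ?_
    rw [add_pow, Finset.sum_mul, Finset.sum_mul]
    refine Finset.sum_congr rfl fun j _ => ?_
    rw [hXp, hYp, one_pow, AddMonoidAlgebra.single_mul_single]
    have hc : ∀ m : ℕ, (m : AddMonoidAlgebra ℚ (Fin 2 →₀ ℤ))
        = AddMonoidAlgebra.single (0 : Fin 2 →₀ ℤ) (m : ℚ) := by
      intro m
      simp [AddMonoidAlgebra.natCast_def]
    rw [hc, hc, mul_one, AddMonoidAlgebra.single_mul_single,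
      AddMonoidAlgebra.single_mul_single]
    simp [mul_comm]
  -- step 4: evaluate the coefficient
  have key : ∀ (j k : ℕ), j ≤ k → j • e0 + (k - j) • e1 = n • e0 + n • e1 →
      j = n ∧ k = 2 * n := by
    intro j k hjk h
    have h0 := DFunLike.congr_fun h 0
    have h1 := DFunLike.congr_fun h 1
    simp only [Finsupp.add_apply, Finsupp.smul_apply, he00, he01, he10, he11,
      smul_zero, add_zero, zero_add, nsmul_eq_mul, mul_one] at h0 h1
    have hj : j = n := by exact_mod_cast h0
    have hkj : k - j = n := by exact_mod_cast h1
    omega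
  have hcoeff : (g ^ N).coeff (n • e0 + n • e1)
      = ((2 * n).choose n : ℚ) * ((N.choose (2 * n) : ℚ)) := by
    rw [hexp]
    rw [AddMonoidAlgebra.coeff_sum, Finsupp.finset_sum_apply]
    rw [Finset.sum_eq_single (2 * n)]
    · rw [AddMonoidAlgebra.coeff_sum, Finsupp.finset_sum_apply, Finset.sum_eq_single n]
      · rw [show (2 * n) - n = n by omega, AddMonoidAlgebra.coeff_single, Finsupp.single_apply, if_pos rfl]
      · intro j hj hjn
        rw [AddMonoidAlgebra.coeff_single, Finsupp.single_apply, if_neg]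
        intro h
        exact hjn ((key j (2 * n) (by simpa [Nat.lt_succ_iff] using hj) h).1)
      · intro h
        exact absurd (by simp [Nat.lt_succ_iff]; omega) h
    · intro k hk hkn
      rw [AddMonoidAlgebra.coeff_sum, Finsupp.finset_sum_apply]
      refine Finset.sum_eq_zero fun j hj => ?_
      rw [AddMonoidAlgebra.coeff_single, Finsupp.single_apply, if_neg]
      intro h
      exact hkn ((key j k (by simpa [Nat.lt_succ_iff] using hj) h).2)
    · intro h
      exact absurd (by simp [Nat.lt_succ_iff]; omega) h
  rw [hconst, hcoeff]
  -- step 5: arithmetic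
  have hnat : (2 * n).choose n * (N.choose (2 * n)) * (n.factorial ^ 2 * (2 * n).factorial)
      = (4 * n).factorial := by
    have h1 : (2 * n).choose n * n.factorial * (2 * n - n).factorial = (2 * n).factorial :=
      Nat.choose_mul_factorial_mul_factorial (by omega)
    have h2 : (4 * n).choose (2 * n) * (2 * n).factorial * (4 * n - 2 * n).factorial
        = (4 * n).factorial := Nat.choose_mul_factorial_mul_factorial (by omega)
    rw [show 2 * n - n = n by omega] at h1
    rw [show 4 * n - 2 * n = 2 * n by omega] at h2
    rw [hN, ← h2, ← h1]
    ring
  calc ((2 * n).choose n : ℚ) * (N.choose (2 * n) : ℚ)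
        * ((n.factorial : ℚ) ^ 2 * ((2 * n).factorial : ℚ))
      = (((2 * n).choose n * (N.choose (2 * n)) * (n.factorial ^ 2 * (2 * n).factorial) : ℕ) : ℚ) := by
        push_cast; ring
    _ = ((4 * n).factorial : ℚ) := by rw [hnat]
end

section
/- Let $f(x,y) = (x+y+1)^6/(x y^2)$. Then for every $n \geq 0$, the constant term of $f^n$ equals $(6n)!/(n!\,(2n)!\,(3n)!)$. -/
/-- For `f = (x+y+1)^6/(x y^2)`, the constant term of `f^n` is `(6n)!/(n! (2n)! (3n)!)`. -/
theorem constant_term_sextic_dP1 (n : ℕ)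
    (f : AddMonoidAlgebra ℚ (Fin 2 →₀ ℤ))
    (hf : f = (Lmon (Finsupp.single 0 1) + Lmon (Finsupp.single 1 1) + 1) ^ 6 *
      Lmon (-(Finsupp.single 0 1 + Finsupp.single 1 2))) :
    ((f ^ n).coeff (0 : Fin 2 →₀ ℤ)) *
        ((n.factorial : ℚ) * ((2 * n).factorial : ℚ) * ((3 * n).factorial : ℚ)) =
      ((6 * n).factorial : ℚ) := by
  set t : Fin 2 →₀ ℤ := Finsupp.single 0 (n : ℤ) + Finsupp.single 1 (2 * n : ℤ) with ht
  set g : AddMonoidAlgebra ℚ (Fin 2 →₀ ℤ) :=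
    Lmon (Finsupp.single 0 1) + Lmon (Finsupp.single 1 1) + 1 with hg
  -- Step 1: reduce to a coefficient of `(x+y+1)^(6n)`
  have h0 : f ^ n = g ^ (6 * n) * AddMonoidAlgebra.single (-t) 1 := by
    rw [hf, mul_pow, ← pow_mul, Lmon, AddMonoidAlgebra.single_pow, one_pow]
    congr 2
    ext i
    fin_cases i <;> simp [ht, Finsupp.single_apply, mul_comm]
  rw [h0, AddMonoidAlgebra.coeff_mul_single_apply, mul_one, zero_add, neg_neg]
  -- exponent vectors
  have key : ∀ p q : ℕ, ((p • Finsupp.single (0 : Fin 2) (1:ℤ) + q • Finsupp.single 1 1 = t)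
      ↔ (p = n ∧ q = 2 * n)) := by
    intro p q
    simp [ht, Finsupp.ext_iff, Fin.forall_fin_two, Finsupp.single_apply]
    intro _
    exact_mod_cast Iff.rfl
  -- Step 2a: coefficient of `(x+y)^i` at `t`
  have hab : ∀ i : ℕ, ((Lmon (Finsupp.single 0 1) + Lmon (Finsupp.single 1 1)) ^ i).coeff t =
      (if i = 3 * n then ((3 * n).choose n : ℚ) else 0) := by
    intro i
    rw [add_pow, AddMonoidAlgebra.coeff_sum, Finsupp.finset_sum_apply]
    simp only [Lmon, AddMonoidAlgebra.single_pow, one_pow, AddMonoidAlgebra.natCast_def,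
      AddMonoidAlgebra.single_mul_single, add_zero, one_mul, AddMonoidAlgebra.coeff_single, Finsupp.single_apply]
    by_cases hi : i = 3 * n
    · subst hi
      rw [if_pos rfl, Finset.sum_eq_single n]
      · rw [if_pos ((key n (3 * n - n)).mpr ⟨rfl, by omega⟩)]
      · intro x hx hxn
        exact if_neg (fun h => hxn ((key _ _).mp h).1)
      · intro h
        exact absurd (Finset.mem_range_succ_iff.mpr (by omega)) h
    · rw [if_neg hi]
      apply Finset.sum_eq_zero
      intro x hx
      refine if_neg (fun h => hi ?_)
      obtain ⟨rfl, h2⟩ := (key _ _).mp h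
      have := Finset.mem_range_succ_iff.mp hx
      omega
  -- Step 2b: coefficient of `(x+y+1)^(6n)` at `t`
  have h2 : (g ^ (6 * n)).coeff t = (((3 * n).choose n : ℚ)) * (((6 * n).choose (3 * n) : ℚ)) := by
    rw [hg, add_pow, AddMonoidAlgebra.coeff_sum, Finsupp.finset_sum_apply]
    simp only [one_pow, mul_one, AddMonoidAlgebra.natCast_def,
      AddMonoidAlgebra.coeff_mul_single_apply, sub_zero, neg_zero, add_zero, hab, ite_mul, zero_mul]
    rw [Finset.sum_ite_eq' (Finset.range (6 * n + 1))]
    rw [if_pos (Finset.mem_range_succ_iff.mpr (by omega))]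
  rw [h2]
  -- Step 3: factorial identity
  have h3 : (3 * n).choose n * ((6 * n).choose (3 * n)) *
      (n.factorial * (2 * n).factorial * (3 * n).factorial) = (6 * n).factorial := by
    have e1 := Nat.choose_mul_factorial_mul_factorial (show 3 * n ≤ 6 * n by omega)
    have e2 := Nat.choose_mul_factorial_mul_factorial (show n ≤ 3 * n by omega)
    rw [show 6 * n - 3 * n = 3 * n by omega] at e1
    rw [show 3 * n - n = 2 * n by omega] at e2
    rw [← e1, ← e2]
    ring
  push_cast [← h3]
  ring
end
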